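/- Let f_1, f_2, … : [0,1] → ℝ be random C¹ processes such that for each t the derivatives f_i'(t) are independent, with uniformly bounded moments, and assume E[‖φ_n'(t)‖] converges as n → ∞ for each t, where φ_n(t) = (f_1(t)/√n, …, f_n(t)/√n). If (1/n)·Σ_{i=1}^n Var(f_i'(t)) does not tend to 0, then lim_{n→∞} ‖E[φ_n'(t)]‖ ≠ lim_{n→∞} E[‖φ_n'(t)‖] (whenever both limits exist). -/

import Mathlib

open MeasureTheory Finset

lemma sqrt_gap_aux {Ω : Type*} [MeasurableSpace Ω] (μ : Measure Ω) [IsProbabilityMeasure μ]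
    (X : Ω → ℝ) (hX : MemLp X 2 μ) (hXnn : ∀ ω, 0 ≤ X ω)
    (hY : Integrable (fun ω => Real.sqrt (X ω)) μ)
    (hm : 0 < ∫ ω, X ω ∂μ) :
    0 ≤ (∫ ω, X ω ∂μ) - (∫ ω, Real.sqrt (X ω) ∂μ)^2 ∧
    (∫ ω, X ω ∂μ) - (∫ ω, Real.sqrt (X ω) ∂μ)^2
      ≤ (ProbabilityTheory.variance X μ) / (∫ ω, X ω ∂μ) := by
  set m := ∫ ω, X ω ∂μ with hmdef
  set e := ∫ ω, Real.sqrt (X ω) ∂μ with hedef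
  have hXint : Integrable X μ := hX.integrable one_le_two
  have hYsm : AEStronglyMeasurable (fun ω => Real.sqrt (X ω)) μ := hY.aestronglyMeasurable
  have hYsq : (fun ω => (Real.sqrt (X ω))^2) = X := funext fun ω => Real.sq_sqrt (hXnn ω)
  have hYℒ2 : MemLp (fun ω => Real.sqrt (X ω)) 2 μ :=
    (memLp_two_iff_integrable_sq hYsm).2 (by rw [show (fun ω => Real.sqrt (X ω) ^ 2) = X from hYsq]; exact hXint)
  have hvarY : ProbabilityTheory.variance (fun ω => Real.sqrt (X ω)) μ = m - e^2 := by
    rw [ProbabilityTheory.variance_eq_sub hYℒ2]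
    congr 1
    rw [show ((fun ω => Real.sqrt (X ω))^2 : Ω → ℝ) = X by funext ω; simpa using Real.sq_sqrt (hXnn ω)]
  constructor
  · rw [← hvarY]; exact ProbabilityTheory.variance_nonneg _ _
  · set s := Real.sqrt m with hsdef
    have hs2 : s^2 = m := Real.sq_sqrt hm.le
    have hsnn : 0 ≤ s := Real.sqrt_nonneg m
    -- integral of (√X - s)^2
    have hexp : (fun ω => (Real.sqrt (X ω) - s)^2) = fun ω => X ω - 2*s*Real.sqrt (X ω) + s^2 := by
      funext ω
      have := Real.sq_sqrt (hXnn ω)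
      ring_nf
      nlinarith [Real.sq_sqrt (hXnn ω)]
    have hint1 : Integrable (fun ω => (Real.sqrt (X ω) - s)^2) μ := by
      rw [hexp]
      exact (hXint.sub ((hY.const_mul (2*s)))).add (integrable_const _)
    have hI1 : ∫ ω, (Real.sqrt (X ω) - s)^2 ∂μ = m - 2*s*e + s^2 := by
      rw [hexp]
      have hsub : Integrable (fun ω => X ω - 2*s*Real.sqrt (X ω)) μ :=
        hXint.sub (hY.const_mul (2*s))
      rw [integral_add hsub (integrable_const _),
        integral_sub hXint (hY.const_mul (2*s)), integral_const_mul, integral_const]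
      simp [hmdef, hedef]
    have key1 : m - e^2 ≤ ∫ ω, (Real.sqrt (X ω) - s)^2 ∂μ := by
      rw [hI1]; nlinarith [sq_nonneg (s - e)]
    have hint2 : Integrable (fun ω => (X ω - m)^2 / m) μ := by
      have : MemLp (X - fun _ => m) 2 μ := hX.sub (memLp_const m)
      exact this.integrable_sq.div_const m
    have key2 : ∫ ω, (Real.sqrt (X ω) - s)^2 ∂μ ≤ ∫ ω, (X ω - m)^2 / m ∂μ := by
      refine integral_mono hint1 hint2 fun ω => ?_
      have hx := Real.sq_sqrt (hXnn ω)
      have hxnn := Real.sqrt_nonneg (X ω)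
      rw [le_div_iff₀ hm]
      nlinarith [sq_nonneg (Real.sqrt (X ω) - s), mul_nonneg hxnn hsnn,
        mul_nonneg (sq_nonneg (Real.sqrt (X ω) - s)) (sq_nonneg (Real.sqrt (X ω))),
        mul_nonneg (mul_nonneg hxnn hsnn) (sq_nonneg (Real.sqrt (X ω) - s))]
    have key3 : ∫ ω, (X ω - m)^2 / m ∂μ = ProbabilityTheory.variance X μ / m := by
      rw [integral_div, ProbabilityTheory.variance_eq_integral hX.aestronglyMeasurable.aemeasurable]
    calc m - e^2 ≤ ∫ ω, (Real.sqrt (X ω) - s)^2 ∂μ := key1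
      _ ≤ ∫ ω, (X ω - m)^2 / m ∂μ := key2
      _ = ProbabilityTheory.variance X μ / m := key3

/-- For independent derivatives `g i = f_i'(t)` with uniformly bounded moments,
with `m_n` bounded away from zero, if the average variance `(1/n)Σ Var(g i)`
does not tend to `0`, then the limit of the norms of the expectations differs
from the limit of the expected norms:
`lim ‖E[φ_n'(t)]‖ ≠ lim E[‖φ_n'(t)‖]`. -/
theorem limit_norm_of_expectation_ne_limit_expected_norm
    {Ω : Type*} [MeasurableSpace Ω] (μ : Measure Ω) [IsProbabilityMeasure μ]
    (g : ℕ → Ω → ℝ) (hmeas : ∀ i, Measurable (g i))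
    (hindep : ProbabilityTheory.iIndepFun g μ)
    (hintk : ∀ i k, Integrable (fun ω => (g i ω)^k) μ)
    (hmom : ∀ k : ℕ, ∃ C : ℝ, ∀ i, |∫ ω, (g i ω)^k ∂μ| ≤ C)
    (hintw : ∀ n : ℕ, Integrable
      (fun ω => Real.sqrt ((1/(n:ℝ)) * ∑ i ∈ Finset.range n, (g i ω)^2)) μ)
    (β : ℝ) (hβ : 0 < β)
    (hlow : ∀ n : ℕ, 1 ≤ n →
      β < Real.sqrt ((1/(n:ℝ)) * ∑ i ∈ Finset.range n, ∫ ω, (g i ω)^2 ∂μ))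
    (a c : ℝ)
    (ha : Filter.Tendsto
      (fun n : ℕ => ∫ ω, Real.sqrt ((1/(n:ℝ)) * ∑ i ∈ Finset.range n, (g i ω)^2) ∂μ)
      Filter.atTop (nhds a))
    (hc : Filter.Tendsto
      (fun n : ℕ => Real.sqrt ((1/(n:ℝ)) * ∑ i ∈ Finset.range n, (∫ ω, g i ω ∂μ)^2))
      Filter.atTop (nhds c))
    (hvar : ¬ Filter.Tendsto
      (fun n : ℕ => (1/(n:ℝ)) * ∑ i ∈ Finset.range n,
        ((∫ ω, (g i ω)^2 ∂μ) - (∫ ω, g i ω ∂μ)^2))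
      Filter.atTop (nhds 0)) :
    c ≠ a := by
  intro hca
  apply hvar
  set m : ℕ → ℝ := fun n => (1/(n:ℝ)) * ∑ i ∈ Finset.range n, ∫ ω, (g i ω)^2 ∂μ with hmdef
  set v : ℕ → ℝ := fun n => (1/(n:ℝ)) * ∑ i ∈ Finset.range n, (∫ ω, g i ω ∂μ)^2 with hvdef
  set e : ℕ → ℝ := fun n =>
    ∫ ω, Real.sqrt ((1/(n:ℝ)) * ∑ i ∈ Finset.range n, (g i ω)^2) ∂μ with hedef
  -- v n → c²
  have hvnn : ∀ n, 0 ≤ v n := fun n => by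
    simp only [hvdef]; positivity
  have hvc : Filter.Tendsto v Filter.atTop (nhds (c^2)) := by
    have h1 := hc.mul hc
    have h2 : (fun n => Real.sqrt (v n) * Real.sqrt (v n)) = v := by
      funext n; exact Real.mul_self_sqrt (hvnn n)
    rw [h2] at h1
    simpa [pow_two] using h1
  -- moment bounds
  obtain ⟨C4, hC4⟩ := hmom 4
  have hC4nn : 0 ≤ C4 := le_trans (abs_nonneg _) (hC4 0)
  -- each g i ^ 2 is in L²
  have hgsq2 : ∀ i, MemLp (fun ω => (g i ω)^2) 2 μ := by
    intro i
    refine (memLp_two_iff_integrable_sq ((hintk i 2).aestronglyMeasurable)).2 ?_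
    have : (fun ω => ((g i ω)^2)^2) = fun ω => (g i ω)^4 := by funext ω; ring
    rw [this]; exact hintk i 4
  have hvar_i : ∀ i, ProbabilityTheory.variance (fun ω => (g i ω)^2) μ ≤ C4 := by
    intro i
    rw [ProbabilityTheory.variance_eq_sub (hgsq2 i)]
    have h4 : (∫ ω, ((fun ω => (g i ω)^2)^2) ω ∂μ) = ∫ ω, (g i ω)^4 ∂μ := by
      congr 1; funext ω; simp [Pi.pow_apply]; ring
    rw [h4]
    have := hC4 i
    have := sq_nonneg (∫ ω, (g i ω)^2 ∂μ)
    have := le_abs_self (∫ ω, (g i ω)^4 ∂μ)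
    linarith
  -- L² membership of the averaged sums
  have hXℒ2 : ∀ n : ℕ, MemLp (fun ω => (1/(n:ℝ)) * ∑ i ∈ Finset.range n, (g i ω)^2) 2 μ := by
    intro n
    have hs : MemLp (fun ω => ∑ i ∈ Finset.range n, (g i ω)^2) 2 μ :=
      memLp_finset_sum _ (fun i _ => hgsq2 i)
    exact hs.const_mul _
  -- expectation of the averaged sum
  have hEX : ∀ n : ℕ,
      (∫ ω, (1/(n:ℝ)) * ∑ i ∈ Finset.range n, (g i ω)^2 ∂μ) = m n := by
    intro n
    rw [integral_const_mul, integral_finset_sum _ (fun i _ => hintk i 2)]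
  -- lower bound on m n
  have hmlb : ∀ n : ℕ, 1 ≤ n → β^2 < m n := by
    intro n hn
    have := hlow n hn
    exact (Real.lt_sqrt hβ.le).1 this
  -- variance bound
  have hvarX : ∀ n : ℕ,
      ProbabilityTheory.variance
        (fun ω => (1/(n:ℝ)) * ∑ i ∈ Finset.range n, (g i ω)^2) μ ≤ (1/(n:ℝ))^2 * (n * C4) := by
    intro n
    rw [ProbabilityTheory.variance_const_mul]
    have hsum : (fun ω => ∑ i ∈ Finset.range n, (g i ω)^2)
        = ∑ i ∈ Finset.range n, (fun ω => (g i ω)^2) := by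
      funext ω; simp
    have hpair : Set.Pairwise ↑(Finset.range n)
        (fun i j => ProbabilityTheory.IndepFun
          (fun ω => (g i ω)^2) (fun ω => (g j ω)^2) μ) := by
      intro i _ j _ hij
      exact (hindep.indepFun hij).comp (measurable_id.pow_const 2) (measurable_id.pow_const 2)
    rw [hsum, ProbabilityTheory.IndepFun.variance_sum (fun i _ => hgsq2 i) hpair]
    have : ∑ i ∈ Finset.range n, ProbabilityTheory.variance (fun ω => (g i ω)^2) μ
        ≤ ∑ _i ∈ Finset.range n, C4 := Finset.sum_le_sum fun i _ => hvar_i i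
    have hpos : (0:ℝ) ≤ (1/(n:ℝ))^2 := sq_nonneg _
    calc (1/(n:ℝ))^2 * ∑ i ∈ Finset.range n, ProbabilityTheory.variance (fun ω => (g i ω)^2) μ
        ≤ (1/(n:ℝ))^2 * ∑ _i ∈ Finset.range n, C4 := by
          exact mul_le_mul_of_nonneg_left this hpos
      _ = (1/(n:ℝ))^2 * (n * C4) := by rw [Finset.sum_const, Finset.card_range]; ring
  -- the squeeze: m n - (e n)² → 0
  have hkey : ∀ n : ℕ, 1 ≤ n →
      0 ≤ m n - (e n)^2 ∧ m n - (e n)^2 ≤ (C4 / β^2) * (1/(n:ℝ)) := by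
    intro n hn
    have hmpos : 0 < m n := lt_trans (by positivity) (hmlb n hn)
    have hXnn : ∀ ω, 0 ≤ (1/(n:ℝ)) * ∑ i ∈ Finset.range n, (g i ω)^2 := by
      intro ω; positivity
    have := sqrt_gap_aux μ _ (hXℒ2 n) hXnn (hintw n) (by rw [hEX n]; exact hmpos)
    rw [hEX n] at this
    refine ⟨this.1, le_trans this.2 ?_⟩
    have hnpos : (0:ℝ) < n := by exact_mod_cast hn
    have hb1 : ProbabilityTheory.variance
        (fun ω => (1/(n:ℝ)) * ∑ i ∈ Finset.range n, (g i ω)^2) μ ≤ C4 / n := by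
      refine le_trans (hvarX n) ?_
      rw [show (1/(n:ℝ))^2 * (n * C4) = C4 / n by field_simp]
    calc ProbabilityTheory.variance
          (fun ω => (1/(n:ℝ)) * ∑ i ∈ Finset.range n, (g i ω)^2) μ / m n
        ≤ (C4 / n) / β^2 := by
          refine div_le_div₀ (by positivity) hb1 (by positivity) (hmlb n hn).le
      _ = (C4 / β^2) * (1/(n:ℝ)) := by ring
  have hub : Filter.Tendsto (fun n : ℕ => (C4 / β^2) * (1/(n:ℝ)))
      Filter.atTop (nhds 0) := by
    have := tendsto_one_div_atTop_nhds_zero_nat (𝕜 := ℝ)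
    simpa using (this.const_mul (C4 / β^2))
  have hme : Filter.Tendsto (fun n => m n - (e n)^2) Filter.atTop (nhds 0) := by
    refine tendsto_of_tendsto_of_tendsto_of_le_of_le' tendsto_const_nhds hub ?_ ?_
    · filter_upwards [Filter.eventually_ge_atTop 1] with n hn
      exact (hkey n hn).1
    · filter_upwards [Filter.eventually_ge_atTop 1] with n hn
      exact (hkey n hn).2
  -- m n → a²
  have he2 : Filter.Tendsto (fun n => (e n)^2) Filter.atTop (nhds (a^2)) := by
    simpa [pow_two] using ha.mul ha
  have hma : Filter.Tendsto m Filter.atTop (nhds (a^2)) := by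
    have := hme.add he2
    simpa using this
  -- conclude
  have hfinal : Filter.Tendsto (fun n => m n - v n) Filter.atTop (nhds 0) := by
    have := hma.sub hvc
    rw [hca] at this
    simpa using this
  have heq : (fun n : ℕ => (1/(n:ℝ)) * ∑ i ∈ Finset.range n,
      ((∫ ω, (g i ω)^2 ∂μ) - (∫ ω, g i ω ∂μ)^2)) = fun n => m n - v n := by
    funext n
    simp only [hmdef, hvdef]
    rw [Finset.sum_sub_distrib, mul_sub]
  rw [heq]
  exact hfinal
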